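/- Let f : X → X be a continuous self-map of a compact metric space and x ∈ X. Suppose that for every ε > 0 there is x_ε ∈ X whose ω-limit set is a minimal set consisting of regularly recurrent points, and limsup_{i→∞} d(f^i(x), f^i(x_ε)) ≤ ε. Then ω(x,f) is a minimal set for f and ω(x,f) ⊆ RR(f). -/

import Mathlib

open Filter Topology Metric Set

/-- A periodic structure: a sequence of positive integers with `m j ∣ m (j+1)` and `m j → ∞`. -/
structure PeriodicStructure where
  m : ℕ → ℕ
  pos : ∀ j, 0 < m j
  dvd : ∀ j, m j ∣ m (j + 1)
  tendsto : Filter.Tendsto m Filter.atTop Filter.atTop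

/-- The odometer space `X_m` of a periodic structure. -/
def PeriodicStructure.space (p : PeriodicStructure) : Type :=
  {x : ℕ → ℕ // ∀ j, x j < p.m j ∧ x (j + 1) % p.m j = x j}

instance (p : PeriodicStructure) : TopologicalSpace p.space :=
  inferInstanceAs (TopologicalSpace
    {x : ℕ → ℕ // ∀ j, x j < p.m j ∧ x (j + 1) % p.m j = x j})

/-- The odometer map `g_m` (adding 1 coordinatewise mod `m j`). -/
def PeriodicStructure.step (p : PeriodicStructure) (x : p.space) : p.space :=
  ⟨fun j => (x.1 j + 1) % p.m j, by
    intro j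
    refine ⟨Nat.mod_lt _ (p.pos j), ?_⟩
    show (x.1 (j + 1) + 1) % p.m (j + 1) % p.m j = (x.1 j + 1) % p.m j
    rw [Nat.mod_mod_of_dvd _ (p.dvd j), ← (x.2 j).2, Nat.add_mod]
    exact Nat.add_mod_mod _ _ _⟩

/-- `S` is an odometer for `f`: `f` restricted to `S` is topologically conjugate to
an odometer `g_m : X_m → X_m`. -/
def IsOdometer {X : Type*} [TopologicalSpace X] (f : X → X) (S : Set X) : Prop :=
  ∃ p : PeriodicStructure, ∃ h : p.space ≃ₜ S,
    ∀ z : p.space, f ((h z : X)) = ((h (p.step z) : X))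

/-- `S` is a periodic orbit of `f`. -/
def IsPeriodicOrbit {X : Type*} (f : X → X) (S : Set X) : Prop :=
  ∃ x ∈ S, ∃ i : ℕ, 0 < i ∧ f^[i] x = x ∧ S = {y | ∃ j < i, f^[j] x = y}

/-- The ω-limit set of a sequence of points. -/
def omegaLimitSeq {X : Type*} [TopologicalSpace X] (x : ℕ → X) : Set X :=
  {y | ∃ φ : ℕ → ℕ, StrictMono φ ∧
    Filter.Tendsto (fun j => x (φ j)) Filter.atTop (nhds y)}

/-- The ω-limit set `ω(x, f)` of a point. -/
def omegaLimitPt {X : Type*} [TopologicalSpace X] (f : X → X) (x : X) : Set X :=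
  omegaLimitSeq fun i => f^[i] x

/-- `M` is a minimal set for `f`. -/
def IsMinimalSet {X : Type*} [TopologicalSpace X] (f : X → X) (M : Set X) : Prop :=
  M.Nonempty ∧ IsClosed M ∧ Set.MapsTo f M M ∧
    ∀ S ⊆ M, IsClosed S → Set.MapsTo f S S → S = ∅ ∨ S = M

/-- `x` is a minimal point for `f`. -/
def IsMinimalPoint {X : Type*} [TopologicalSpace X] (f : X → X) (x : X) : Prop :=
  IsMinimalSet f (closure (Set.range fun i => f^[i] x))

/-- `x` is a regularly recurrent point for `f`. -/
def RegularlyRecurrent {X : Type*} [PseudoMetricSpace X] (f : X → X) (x : X) : Prop :=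
  ∀ ε > 0, ∃ n : ℕ, 0 < n ∧ ∀ k : ℕ, dist x (f^[k * n] x) ≤ ε

/-- `f` has the shadowing property. -/
def ShadowingProperty {X : Type*} [PseudoMetricSpace X] (f : X → X) : Prop :=
  ∀ ε > 0, ∃ δ > 0, ∀ ξ : ℕ → X,
    (∀ i, dist (f (ξ i)) (ξ (i + 1)) ≤ δ) → ∃ y, ∀ i, dist (f^[i] y) (ξ i) ≤ ε


lemma omega_char {X : Type*} [MetricSpace X] (u : ℕ → X) (y : X) :
    y ∈ omegaLimitSeq u ↔ ∀ N : ℕ, ∀ ε > (0:ℝ), ∃ i ≥ N, dist (u i) y < ε := by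
  constructor
  · rintro ⟨φ, hφ, hlim⟩ N ε hε
    rcases (Metric.tendsto_atTop.mp hlim) ε hε with ⟨J, hJ⟩
    exact ⟨φ (max J N), le_trans (le_max_right J N) hφ.le_apply, hJ _ (le_max_left J N)⟩
  · intro H
    have H' : ∀ N k : ℕ, ∃ i, N ≤ i ∧ dist (u i) y < 1/(k+1) := by
      intro N k
      rcases H N (1/(k+1)) (by positivity) with ⟨i, hi1, hi2⟩
      exact ⟨i, hi1, hi2⟩
    choose F h1 h2 using H'
    set φ : ℕ → ℕ := fun n => Nat.rec (F 0 0) (fun k ih => F (ih+1) (k+1)) n with hφdef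
    have hsucc : ∀ k, φ (k+1) = F (φ k + 1) (k+1) := fun k => rfl
    have hmono : StrictMono φ := strictMono_nat_of_lt_succ (fun k => by
      have := h1 (φ k + 1) (k+1); rw [hsucc]; omega)
    refine ⟨φ, hmono, ?_⟩
    rw [Metric.tendsto_atTop]
    intro ε hε
    obtain ⟨K, hK⟩ := exists_nat_gt (1/ε)
    refine ⟨K+1, fun k hk => ?_⟩
    have hd : dist (u (φ k)) y < 1/(k+1) := by
      cases k with
      | zero => exact h2 0 0
      | succ j => simpa using h2 (φ j + 1) (j+1)
    have h1k : (1:ℝ)/(k+1) ≤ 1/(K+1) := by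
      apply one_div_le_one_div_of_le (by positivity)
      exact_mod_cast by omega
    have h2k : (1:ℝ)/(K+1) < ε := by
      rw [div_lt_iff₀ (by positivity)]
      have : 1 < ε * K := by
        rw [div_lt_iff₀ hε] at hK; linarith [mul_comm ε (K:ℝ)]
      nlinarith
    linarith

lemma omega_closed {X : Type*} [MetricSpace X] (u : ℕ → X) : IsClosed (omegaLimitSeq u) := by
  apply isClosed_of_closure_subset
  intro y hy
  rw [omega_char]
  intro N ε hε
  rcases Metric.mem_closure_iff.mp hy (ε/2) (by positivity) with ⟨y', hy', hd⟩
  rcases (omega_char u y').mp hy' N (ε/2) (by positivity) with ⟨i, hi, hd2⟩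
  refine ⟨i, hi, ?_⟩
  have := dist_triangle (u i) y' y
  rw [dist_comm y y'] at hd
  linarith

lemma key_approx {X : Type*} [MetricSpace X] [CompactSpace X]
    (f : X → X) (hf : Continuous f) (x x' : X) (ε : ℝ)
    (hls : Filter.limsup (fun i => dist (f^[i] x) (f^[i] x')) Filter.atTop ≤ ε)
    {y : X} (hy : y ∈ omegaLimitPt f x) :
    ∃ z ∈ omegaLimitPt f x', ∀ t : ℕ, dist (f^[t] y) (f^[t] z) ≤ ε := by
  obtain ⟨φ, hφ, hlim⟩ := hy
  obtain ⟨z, -, ψ, hψ, hzlim⟩ := isCompact_univ.tendsto_subseq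
    (x := fun j => f^[φ j] x') (fun n => mem_univ _)
  have hzlim' : Tendsto (fun j => f^[φ (ψ j)] x') atTop (𝓝 z) := hzlim
  refine ⟨z, ⟨φ ∘ ψ, hφ.comp hψ, hzlim'⟩, fun t => ?_⟩
  have h1 : Tendsto (fun j => f^[t + φ (ψ j)] x) atTop (𝓝 (f^[t] y)) := by
    have := ((hf.iterate t).continuousAt.tendsto).comp (hlim.comp hψ.tendsto_atTop)
    simpa [Function.comp_def, Function.iterate_add_apply] using this
  have h2 : Tendsto (fun j => f^[t + φ (ψ j)] x') atTop (𝓝 (f^[t] z)) := by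
    have := ((hf.iterate t).continuousAt.tendsto).comp hzlim'
    simpa [Function.comp_def, Function.iterate_add_apply] using this
  have hdist := h1.dist h2
  by_contra hcon
  push_neg at hcon
  set c := (ε + dist (f^[t] y) (f^[t] z)) / 2 with hc
  have hεc : ε < c := by rw [hc]; linarith
  have hcd : c < dist (f^[t] y) (f^[t] z) := by rw [hc]; linarith
  have hbdd : IsBoundedUnder (· ≤ ·) atTop (fun i => dist (f^[i] x) (f^[i] x')) := by
    obtain ⟨C, hC⟩ := Metric.isBounded_iff.mp (isCompact_univ : IsCompact (univ : Set X)).isBounded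
    exact isBoundedUnder_of ⟨C, fun i => hC (mem_univ _) (mem_univ _)⟩
  have hev : ∀ᶠ i in atTop, dist (f^[i] x) (f^[i] x') < c :=
    eventually_lt_of_limsup_lt (lt_of_le_of_lt hls hεc) hbdd
  have htd : Tendsto (fun j => t + φ (ψ j)) atTop atTop :=
    tendsto_atTop_mono (fun j => le_trans (hφ.comp hψ).le_apply (Nat.le_add_left _ _)) tendsto_id
  have hle : dist (f^[t] y) (f^[t] z) ≤ c :=
    le_of_tendsto hdist ((htd.eventually hev).mono fun j hj => hj.le)
  linarith

theorem omegaLimit_minimal_rr_of_approx {X : Type*} [MetricSpace X] [CompactSpace X]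
    (f : X → X) (hf : Continuous f) (x : X)
    (h : ∀ ε > (0 : ℝ), ∃ xe : X,
      IsMinimalSet f (omegaLimitPt f xe) ∧
      (∀ z ∈ omegaLimitPt f xe, RegularlyRecurrent f z) ∧
      Filter.limsup (fun i => dist (f^[i] x) (f^[i] xe)) Filter.atTop ≤ ε) :
    IsMinimalSet f (omegaLimitPt f x) ∧
      ∀ z ∈ omegaLimitPt f x, RegularlyRecurrent f z := by

  set A := omegaLimitPt f x with hA
  -- A is nonempty
  have hAne : A.Nonempty := by
    obtain ⟨a, -, φ, hφ, halim⟩ := isCompact_univ.tendsto_subseq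
      (x := fun i => f^[i] x) (fun n => mem_univ _)
    exact ⟨a, φ, hφ, halim⟩
  -- A is closed
  have hAclosed : IsClosed A := omega_closed _
  -- A is invariant
  have hAmaps : MapsTo f A A := by
    rintro y ⟨φ, hφ, hlim⟩
    refine ⟨fun j => φ j + 1, fun a b hab => by simp only []; have := hφ hab; omega, ?_⟩
    have : Tendsto (fun j => f (f^[φ j] x)) atTop (𝓝 (f y)) :=
      (hf.continuousAt.tendsto).comp hlim
    simpa [Function.iterate_succ_apply'] using this
  -- orbit density
  have dense_orbit : ∀ y ∈ A, ∀ a ∈ A, ∀ ε > (0:ℝ), ∃ t : ℕ, dist (f^[t] y) a < ε := by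
    intro y hy a ha ε hε
    obtain ⟨x', hmin, hRR, hls⟩ := h (ε/4) (by positivity)
    obtain ⟨z, hz, hzd⟩ := key_approx f hf x x' (ε/4) hls hy
    obtain ⟨w, hw, hwd⟩ := key_approx f hf x x' (ε/4) hls ha
    have horb : ∀ t, f^[t] z ∈ omegaLimitPt f x' := by
      intro t
      induction t with
      | zero => exact hz
      | succ t ih => rw [Function.iterate_succ_apply']; exact hmin.2.2.1 ih
    set O := closure (range fun t : ℕ => f^[t] z) with hO
    have hOsub : O ⊆ omegaLimitPt f x' :=
      closure_minimal (range_subset_iff.mpr horb) hmin.2.1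
    have hOmaps : MapsTo f O O := by
      intro p hp
      have himg : f '' O ⊆ O := by
        refine subset_trans (image_closure_subset_closure_image hf) (closure_mono ?_)
        rintro q ⟨r, ⟨t, rfl⟩, rfl⟩
        exact ⟨t+1, by simp only []; rw [Function.iterate_succ_apply']⟩
      exact himg (mem_image_of_mem f hp)
    have hzO : z ∈ O := subset_closure ⟨0, rfl⟩
    have hOeq : O = omegaLimitPt f x' := by
      rcases hmin.2.2.2 O hOsub isClosed_closure hOmaps with h0 | h1
      · exact absurd (h0 ▸ hzO) (notMem_empty z)
      · exact h1
    have hwO : w ∈ O := hOeq ▸ hw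
    obtain ⟨b, ⟨t, rfl⟩, hb⟩ := Metric.mem_closure_iff.mp hwO (ε/4) (by positivity)
    refine ⟨t, ?_⟩
    have d1 : dist (f^[t] y) (f^[t] z) ≤ ε/4 := hzd t
    have d2 : dist a w ≤ ε/4 := by simpa using hwd 0
    have h4 := dist_triangle4 (f^[t] y) (f^[t] z) w a
    rw [dist_comm w (f^[t] z)] at hb
    rw [dist_comm w a] at h4
    linarith
  constructor
  · refine ⟨hAne, hAclosed, hAmaps, ?_⟩
    intro S hS hSc hSm
    rcases S.eq_empty_or_nonempty with h0 | ⟨y, hy⟩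
    · exact Or.inl h0
    · refine Or.inr (Subset.antisymm hS ?_)
      intro a ha
      have horbS : ∀ t, f^[t] y ∈ S := by
        intro t
        induction t with
        | zero => exact hy
        | succ t ih => rw [Function.iterate_succ_apply']; exact hSm ih
      have hac : a ∈ closure (range fun t : ℕ => f^[t] y) := by
        rw [Metric.mem_closure_iff]
        intro ε hε
        obtain ⟨t, ht⟩ := dense_orbit y (hS hy) a ha ε hε
        exact ⟨f^[t] y, ⟨t, rfl⟩, by rw [dist_comm]; exact ht⟩
      exact closure_minimal (range_subset_iff.mpr horbS) hSc hac
  · intro y hy ε hε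
    obtain ⟨x', hmin, hRR, hls⟩ := h (ε/3) (by positivity)
    obtain ⟨z, hz, hzd⟩ := key_approx f hf x x' (ε/3) hls hy
    obtain ⟨n, hn, hzn⟩ := hRR z hz (ε/3) (by positivity)
    refine ⟨n, hn, fun k => ?_⟩
    have d1 : dist y z ≤ ε/3 := by simpa using hzd 0
    have d2 : dist (f^[k*n] y) (f^[k*n] z) ≤ ε/3 := hzd (k*n)
    have d3 := hzn k
    have h4 := dist_triangle4 y z (f^[k*n] z) (f^[k*n] y)
    rw [dist_comm (f^[k*n] z) (f^[k*n] y)] at h4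
    linarith
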